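/- Let N = 2n+1, v : ℕ → ℝ with |v(k)| ≤ C/k² and v(k) > 0, hc(k) = v(k) + Σ_{m=1}^∞ [v(mN+k) + v(mN−k)] ≠ 0 and hs(k) = hc(k) for 1 ≤ k ≤ n. With interpolation data f_1,…,f_N at t_j = 2π(j−1)/N and coefficients a_k, b_k as in the discrete Fourier formulas, the spline St(t) = a_0/2 + Σ_{k=1}^n [a_k c_k(t)/hc(k) + b_k s_k(t)/hs(k)] satisfies St(t_j) = f_j for all j, where c_k, s_k are the basis functions with all plus signs. -/

import Mathlib

open Real Finset

lemma sum_cos_range_zero (N : ℕ) (hN : 0 < N) (d : ℤ) (hd : ¬ (N:ℤ) ∣ d) :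
    ∑ k ∈ Finset.range N, Real.cos ((k : ℝ) * (2 * π * d / N)) = 0 := by
  set θ : ℝ := 2 * π * d / N with hθ
  set x : ℂ := Complex.exp (θ * Complex.I) with hxdef
  have hNR : (N:ℝ) ≠ 0 := Nat.cast_ne_zero.mpr hN.ne'
  have hx : x ≠ 1 := by
    intro h
    rw [hxdef, Complex.exp_eq_one_iff] at h
    obtain ⟨m, hm⟩ := h
    have h2 : (θ:ℂ) = ((2*π*m : ℝ):ℂ) := by
      apply mul_right_cancel₀ Complex.I_ne_zero
      push_cast
      linear_combination hm
    have hθm : θ = 2*π*m := by exact_mod_cast h2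
    have h4 : 2*π*(d:ℝ)/N = 2*π*m := by rw [← hθ]; exact hθm
    have h5 : 2*π*(d:ℝ) = 2*π*((m:ℝ)*N) := by field_simp at h4; rw [h4]; ring
    have h6 : (d:ℝ) = ((m * N : ℤ):ℝ) := by
      have := mul_left_cancel₀ (by positivity : (2*π:ℝ) ≠ 0) h5
      push_cast; linarith
    exact hd ⟨m, by exact_mod_cast h6 ▸ (by push_cast; ring : ((m*N:ℤ):ℝ) = ((N*m:ℤ):ℝ))⟩
  have hxN : x ^ N = 1 := by
    rw [hxdef, ← Complex.exp_nat_mul]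
    have hNθR : (N:ℝ) * θ = (d:ℝ) * (2*π) := by rw [hθ]; field_simp
    have : (N:ℂ) * ((θ:ℂ) * Complex.I) = (d:ℂ) * (2 * π * Complex.I) := by
      rw [show ((N:ℂ) * ((θ:ℂ) * Complex.I)) = (((N:ℝ) * θ : ℝ) : ℂ) * Complex.I by push_cast; ring, hNθR]
      push_cast; ring
    rw [this]
    exact_mod_cast Complex.exp_int_mul_two_pi_mul_I d
  have hgeom : ∑ k ∈ Finset.range N, x ^ k = 0 := by
    rw [geom_sum_eq hx, hxN, sub_self, zero_div]
  have hre : ∀ k : ℕ, Real.cos ((k:ℝ) * θ) = (x ^ k).re := by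
    intro k
    rw [hxdef, ← Complex.exp_nat_mul]
    have : (k:ℂ) * ((θ:ℂ) * Complex.I) = ((k * θ : ℝ) : ℂ) * Complex.I := by push_cast; ring
    rw [this, Complex.exp_ofReal_mul_I_re]
  calc ∑ k ∈ Finset.range N, Real.cos ((k : ℝ) * θ)
      = ∑ k ∈ Finset.range N, (x ^ k).re := by exact Finset.sum_congr rfl fun k _ => hre k
    _ = (∑ k ∈ Finset.range N, x ^ k).re := (Complex.re_sum _ _).symm
    _ = 0 := by rw [hgeom]; rfl

lemma kernel_zero (n : ℕ) (l j : ℕ) (hl1 : 1 ≤ l) (hl2 : l ≤ 2*n+1)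
    (hj1 : 1 ≤ j) (hj2 : j ≤ 2*n+1) (hne : l ≠ j) :
    (1:ℝ) + 2 * ∑ k ∈ Finset.Icc 1 n, Real.cos ((k:ℝ) * (2 * π * ((l:ℝ) - (j:ℝ)) / (2*n+1))) = 0 := by
  set N : ℕ := 2*n+1 with hNdef
  have hN : 0 < N := Nat.succ_pos _
  set d : ℤ := (l:ℤ) - j with hddef
  have hcast : ((l:ℝ) - (j:ℝ)) = (d:ℝ) := by push_cast [hddef]; ring
  set θ : ℝ := 2 * π * ((l:ℝ) - (j:ℝ)) / (2*n+1) with hθdef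
  have hθd : θ = 2 * π * (d:ℝ) / N := by rw [hθdef, hcast]; push_cast [hNdef]; ring_nf
  have hdvd : ¬ (N:ℤ) ∣ d := by
    intro h
    have habs : |d| < (N:ℤ) := by
      rw [hddef, abs_lt]
      constructor <;> [skip; skip] <;> (simp only [hNdef]; push_cast; omega)
    have := Int.eq_zero_of_abs_lt_dvd h habs
    rw [hddef] at this
    omega
  have hsum0 : ∑ k ∈ Finset.range N, Real.cos ((k : ℝ) * θ) = 0 := by
    rw [hθd]; exact sum_cos_range_zero N hN d hdvd
  have hNθ : (N:ℝ) * θ = (d:ℤ) * (2 * π) := by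
    rw [hθd]
    have : (N:ℝ) ≠ 0 := Nat.cast_ne_zero.mpr hN.ne'
    field_simp
  -- reflected sum
  have hrefl : ∑ k ∈ Finset.Ico (n+1) N, Real.cos ((k:ℝ) * θ)
      = ∑ k ∈ Finset.Icc 1 n, Real.cos ((k:ℝ) * θ) := by
    apply Finset.sum_nbij' (i := fun k => N - k) (j := fun k => N - k)
    · intro k hk; simp only [Finset.mem_Ico] at hk; simp only [Finset.mem_Icc]; omega
    · intro k hk; simp only [Finset.mem_Icc] at hk; simp only [Finset.mem_Ico]; omega
    · intro k hk; simp only [Finset.mem_Ico] at hk; omega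
    · intro k hk; simp only [Finset.mem_Icc] at hk; omega
    · intro k hk
      simp only [Finset.mem_Ico] at hk
      have hkN : k ≤ N := by omega
      have : ((N - k : ℕ) : ℝ) = (N:ℝ) - k := by push_cast [hkN]; ring
      rw [this, sub_mul, hNθ]
      exact (Real.cos_int_mul_two_pi_sub ((k:ℝ)*θ) d).symm
  have hsplit : ∑ k ∈ Finset.range N, Real.cos ((k:ℝ) * θ)
      = 1 + 2 * ∑ k ∈ Finset.Icc 1 n, Real.cos ((k:ℝ) * θ) := by
    rw [Finset.range_eq_Ico, ← Finset.sum_Ico_consecutive _ (Nat.zero_le (n+1)) (by omega : n+1 ≤ N)]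
    rw [Finset.sum_eq_sum_Ico_succ_bot (by omega) _]
    rw [hrefl]
    have : Finset.Ico (0+1) (n+1) = Finset.Icc 1 n := Finset.Ico_add_one_right_eq_Icc 1 n
    rw [this]
    simp
    ring
  rw [← hsplit, hsum0]

theorem spline_interpolation_grid00
    (n : ℕ) (hn : 1 ≤ n) (v : ℕ → ℝ) (C : ℝ)
    (hv : ∀ k : ℕ, 1 ≤ k → |v k| ≤ C / (k : ℝ) ^ 2)
    (hvpos : ∀ k : ℕ, 1 ≤ k → 0 < v k) (f : ℕ → ℝ) :
    let N : ℕ := 2 * n + 1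
    let t : ℕ → ℝ := fun j => 2 * π * ((j : ℝ) - 1) / N
    let a : ℕ → ℝ := fun k => (2 / (N : ℝ)) * ∑ j ∈ Finset.Icc 1 N, f j * Real.cos (k * t j)
    let b : ℕ → ℝ := fun k => (2 / (N : ℝ)) * ∑ j ∈ Finset.Icc 1 N, f j * Real.sin (k * t j)
    let hc : ℕ → ℝ := fun k => v k + ∑' m : ℕ, (v ((m + 1) * N + k) + v ((m + 1) * N - k))
    let hs : ℕ → ℝ := hc
    let c : ℕ → ℝ → ℝ := fun k x => v k * Real.cos (k * x) +
      ∑' m : ℕ,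
        (v ((m + 1) * N + k) * Real.cos ((((m + 1) * N + k : ℕ) : ℝ) * x) +
         v ((m + 1) * N - k) * Real.cos ((((m + 1) * N - k : ℕ) : ℝ) * x))
    let s : ℕ → ℝ → ℝ := fun k x => v k * Real.sin (k * x) +
      ∑' m : ℕ,
        (v ((m + 1) * N + k) * Real.sin ((((m + 1) * N + k : ℕ) : ℝ) * x) -
         v ((m + 1) * N - k) * Real.sin ((((m + 1) * N - k : ℕ) : ℝ) * x))
    let St : ℝ → ℝ := fun x =>
      a 0 / 2 + ∑ k ∈ Finset.Icc 1 n, (a k * c k x / hc k + b k * s k x / hs k)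
    (∀ k ∈ Finset.Icc 1 n, hc k ≠ 0) →
    ∀ j ∈ Finset.Icc 1 N, St (t j) = f j := by
  intro N t a b hc hs c s St hhc j hj
  have hN : N = 2 * n + 1 := rfl
  have ht : ∀ i : ℕ, t i = 2 * π * ((i : ℝ) - 1) / N := fun _ => rfl
  have ha : ∀ k : ℕ, a k = (2 / (N : ℝ)) * ∑ l ∈ Finset.Icc 1 N, f l * Real.cos (k * t l) :=
    fun _ => rfl
  have hb : ∀ k : ℕ, b k = (2 / (N : ℝ)) * ∑ l ∈ Finset.Icc 1 N, f l * Real.sin (k * t l) :=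
    fun _ => rfl
  have hhcd : ∀ k : ℕ, hc k = v k + ∑' m : ℕ, (v ((m + 1) * N + k) + v ((m + 1) * N - k)) :=
    fun _ => rfl
  have hshc : hs = hc := rfl
  have hcd : ∀ (k : ℕ) (x : ℝ), c k x = v k * Real.cos (k * x) +
      ∑' m : ℕ,
        (v ((m + 1) * N + k) * Real.cos ((((m + 1) * N + k : ℕ) : ℝ) * x) +
         v ((m + 1) * N - k) * Real.cos ((((m + 1) * N - k : ℕ) : ℝ) * x)) := fun _ _ => rfl
  have hsd : ∀ (k : ℕ) (x : ℝ), s k x = v k * Real.sin (k * x) +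
      ∑' m : ℕ,
        (v ((m + 1) * N + k) * Real.sin ((((m + 1) * N + k : ℕ) : ℝ) * x) -
         v ((m + 1) * N - k) * Real.sin ((((m + 1) * N - k : ℕ) : ℝ) * x)) := fun _ _ => rfl
  have hStd : ∀ x : ℝ, St x =
      a 0 / 2 + ∑ k ∈ Finset.Icc 1 n, (a k * c k x / hc k + b k * s k x / hs k) := fun _ => rfl
  clear_value N t a b hc hs c s St
  rw [hshc] at hStd
  simp only [Finset.mem_Icc] at hj
  have hNpos : 0 < N := by omega
  have hNR : (N:ℝ) ≠ 0 := Nat.cast_ne_zero.mpr hNpos.ne'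
  obtain ⟨E, hNt⟩ : ∃ E : ℤ, (N:ℝ) * t j = (E:ℝ) * (2*π) := by
    refine ⟨((j - 1 : ℕ) : ℤ), ?_⟩
    rw [ht j]
    have hjc : ((j:ℝ) - 1) = ((j - 1 : ℕ) : ℝ) := by
      rw [Nat.cast_sub hj.1]; norm_num
    rw [hjc]
    push_cast
    field_simp
  have h1 : ∀ (m k : ℕ), ((((m+1)*N + k : ℕ)):ℝ) * t j
      = (k:ℝ) * t j + (((m+1) * E : ℤ):ℝ) * (2*π) := by
    intro m k
    push_cast
    linear_combination ((m:ℝ)+1) * hNt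
  have h2 : ∀ (m k : ℕ), k ≤ n → ((((m+1)*N - k : ℕ)):ℝ) * t j
      = (((m+1) * E : ℤ):ℝ) * (2*π) - (k:ℝ) * t j := by
    intro m k hk
    have hkN : k ≤ (m+1)*N := by nlinarith
    rw [Nat.cast_sub hkN]
    push_cast
    linear_combination ((m:ℝ)+1) * hNt
  have hceval : ∀ k, k ≤ n → c k (t j) = Real.cos ((k:ℝ) * t j) * hc k := by
    intro k hk
    rw [hcd, hhcd]
    have hterm : ∀ m : ℕ,
        (v ((m + 1) * N + k) * Real.cos ((((m + 1) * N + k : ℕ) : ℝ) * t j) +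
         v ((m + 1) * N - k) * Real.cos ((((m + 1) * N - k : ℕ) : ℝ) * t j))
        = Real.cos ((k:ℝ) * t j) * (v ((m + 1) * N + k) + v ((m + 1) * N - k)) := by
      intro m
      rw [h1 m k, h2 m k hk, Real.cos_add_int_mul_two_pi, Real.cos_int_mul_two_pi_sub]
      ring
    rw [tsum_congr hterm, tsum_mul_left]
    ring
  have hseval : ∀ k, k ≤ n → s k (t j) = Real.sin ((k:ℝ) * t j) * hc k := by
    intro k hk
    rw [hsd, hhcd]
    have hterm : ∀ m : ℕ,
        (v ((m + 1) * N + k) * Real.sin ((((m + 1) * N + k : ℕ) : ℝ) * t j) -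
         v ((m + 1) * N - k) * Real.sin ((((m + 1) * N - k : ℕ) : ℝ) * t j))
        = Real.sin ((k:ℝ) * t j) * (v ((m + 1) * N + k) + v ((m + 1) * N - k)) := by
      intro m
      rw [h1 m k, h2 m k hk, Real.sin_add_int_mul_two_pi, Real.sin_int_mul_two_pi_sub]
      ring
    rw [tsum_congr hterm, tsum_mul_left]
    ring
  have hSt2 : St (t j) = a 0 / 2 +
      ∑ k ∈ Finset.Icc 1 n, (a k * Real.cos ((k:ℝ) * t j) + b k * Real.sin ((k:ℝ) * t j)) := by
    rw [hStd]
    congr 1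
    apply Finset.sum_congr rfl
    intro k hk
    have hk2 : k ≤ n := (Finset.mem_Icc.mp hk).2
    have h0 := hhc k hk
    rw [hceval k hk2, hseval k hk2]
    field_simp
  have ha0 : a 0 = (2/(N:ℝ)) * ∑ l ∈ Finset.Icc 1 N, f l := by
    rw [ha]
    congr 1
    apply Finset.sum_congr rfl
    intro l _
    norm_num
  have hab : ∀ k : ℕ, a k * Real.cos ((k:ℝ) * t j) + b k * Real.sin ((k:ℝ) * t j)
      = (2/(N:ℝ)) * ∑ l ∈ Finset.Icc 1 N, f l * Real.cos ((k:ℝ) * (t l - t j)) := by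
    intro k
    rw [ha, hb]
    have hx : ∑ l ∈ Finset.Icc 1 N, f l * Real.cos ((k:ℝ) * (t l - t j))
        = ∑ l ∈ Finset.Icc 1 N, (f l * Real.cos ((k:ℝ) * t l) * Real.cos ((k:ℝ) * t j)
            + f l * Real.sin ((k:ℝ) * t l) * Real.sin ((k:ℝ) * t j)) := by
      apply Finset.sum_congr rfl
      intro l _
      rw [mul_sub, Real.cos_sub]
      ring
    rw [hx]
    rw [Finset.sum_add_distrib]
    rw [← Finset.sum_mul, ← Finset.sum_mul]
    ring
  have hkernel : ∀ l, 1 ≤ l → l ≤ N →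
      (1:ℝ) + 2 * ∑ k ∈ Finset.Icc 1 n, Real.cos ((k:ℝ) * (t l - t j))
      = if l = j then (N:ℝ) else 0 := by
    intro l hl1 hl2
    by_cases hlj : l = j
    · subst hlj
      simp only [sub_self, mul_zero, Real.cos_zero, if_true]
      rw [Finset.sum_const, Nat.card_Icc, hN]
      push_cast
      ring
    · rw [if_neg hlj]
      have htlj : t l - t j = 2 * π * ((l:ℝ) - (j:ℝ)) / (2*(n:ℝ)+1) := by
        rw [ht l, ht j, hN]
        push_cast
        field_simp
        ring
      have hker := kernel_zero n l j hl1 (by omega) hj.1 (by omega) hlj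
      rw [htlj]
      exact hker
  have hswap : ∑ k ∈ Finset.Icc 1 n, ∑ l ∈ Finset.Icc 1 N, f l * Real.cos ((k:ℝ) * (t l - t j))
      = ∑ l ∈ Finset.Icc 1 N, ∑ k ∈ Finset.Icc 1 n, f l * Real.cos ((k:ℝ) * (t l - t j)) :=
    Finset.sum_comm
  have hmain : St (t j) = (1/(N:ℝ)) * ∑ l ∈ Finset.Icc 1 N,
      f l * ((1:ℝ) + 2 * ∑ k ∈ Finset.Icc 1 n, Real.cos ((k:ℝ) * (t l - t j))) := by
    rw [hSt2, ha0, Finset.sum_congr rfl (fun k _ => hab k), ← Finset.mul_sum, hswap]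
    rw [Finset.mul_sum, Finset.sum_div, Finset.mul_sum, Finset.mul_sum, ← Finset.sum_add_distrib]
    apply Finset.sum_congr rfl
    intro l _
    rw [← Finset.mul_sum]
    ring
  rw [hmain, Finset.sum_congr rfl (fun l hl =>
    by rw [hkernel l (Finset.mem_Icc.mp hl).1 (Finset.mem_Icc.mp hl).2])]
  have hjmem : j ∈ Finset.Icc 1 N := Finset.mem_Icc.mpr hj
  have hsplit : ∀ l ∈ Finset.Icc 1 N,
      f l * (if l = j then (N:ℝ) else 0) = if l = j then f l * (N:ℝ) else 0 := by
    intro l _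
    split <;> simp
  rw [Finset.sum_congr rfl hsplit, Finset.sum_ite_eq' (Finset.Icc 1 N) j (fun l => f l * (N:ℝ)),
    if_pos hjmem]
  field_simp
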